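/- (Doubly-exponential decay of the SK decoding error, equation (10).) Let h, P, σ > 0, set S = P/σ² and C = (1/2)·log₂(1 + h²·S). Then for every natural number N ≥ 1 and every real R, 2·Q( √(12·h²·S·(1 + h²·S)^{N−1}) / 2^{N·R + 1} ) ≤ exp( −(3/2)·(h²·S/(1 + h²·S))·2^{2N·(C − R)} ). In particular, if R < C the right-hand side tends to zero doubly exponentially as N → ∞. -/
import Mathlib


open MeasureTheory Filter

/-- The Gaussian tail (Q-) function: `Q(x) = (1/√(2π)) ∫_x^∞ exp(-t²/2) dt`. -/
noncomputable def gaussianQ (x : ℝ) : ℝ :=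
  (Real.sqrt (2 * Real.pi))⁻¹ * ∫ t in Set.Ici x, Real.exp (-t ^ 2 / 2)

lemma gaussian_int_Ici_zero : (∫ t in Set.Ici (0:ℝ), Real.exp (-t ^ 2 / 2)) = Real.sqrt (2 * Real.pi) / 2 := by
  rw [MeasureTheory.integral_Ici_eq_integral_Ioi]
  have : ∀ t : ℝ, Real.exp (-t ^ 2 / 2) = Real.exp (-(1/2) * t ^ 2) := by
    intro t; ring_nf
  simp_rw [this]
  rw [integral_gaussian_Ioi, show Real.pi / (1/2) = 2 * Real.pi by ring]

lemma gaussianQ_le (x : ℝ) (hx : 0 ≤ x) :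
    gaussianQ x ≤ (1/2) * Real.exp (-x^2/2) := by
  have hint : Integrable (fun t : ℝ => Real.exp (-t ^ 2 / 2)) := by
    have := integrable_exp_neg_mul_sq (b := 1/2) (by norm_num)
    convert this using 2 with t
    ring_nf
  have hshift : (∫ t in Set.Ici x, Real.exp (-(t - x) ^ 2 / 2)) =
      ∫ u in Set.Ici (0:ℝ), Real.exp (-u ^ 2 / 2) := by
    have hmp := measurePreserving_add_right (volume : Measure ℝ) x
    have hemb := (MeasurableEquiv.addRight x).measurableEmbedding
    have := hmp.setIntegral_preimage_emb hemb
      (fun t => Real.exp (-(t - x) ^ 2 / 2)) (Set.Ici x)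
    rw [← this]
    have hpre : (· + x) ⁻¹' (Set.Ici x) = Set.Ici (0:ℝ) := by
      ext u; simp [Set.mem_Ici, le_add_iff_nonneg_left]
    rw [hpre]
    congr 1; ext u; congr 1; ring
  have hmono : (∫ t in Set.Ici x, Real.exp (-t ^ 2 / 2)) ≤
      ∫ t in Set.Ici x, Real.exp (-x^2/2) * Real.exp (-(t - x) ^ 2 / 2) := by
    apply setIntegral_mono_on
    · exact hint.integrableOn
    · apply Integrable.integrableOn
      apply Integrable.const_mul
      have := integrable_exp_neg_mul_sq (b := 1/2) (by norm_num)
      have := this.comp_sub_right x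
      convert this using 2 with t
      simp; ring_nf
    · exact measurableSet_Ici
    · intro t ht
      rw [← Real.exp_add]
      apply Real.exp_le_exp.mpr
      have : x * (t - x) ≥ 0 := mul_nonneg hx (by simpa [Set.mem_Ici, sub_nonneg] using ht)
      nlinarith
  have : (∫ t in Set.Ici x, Real.exp (-t ^ 2 / 2)) ≤
      Real.exp (-x^2/2) * (Real.sqrt (2 * Real.pi) / 2) := by
    calc _ ≤ _ := hmono
    _ = Real.exp (-x^2/2) * ∫ t in Set.Ici x, Real.exp (-(t - x) ^ 2 / 2) := by
        rw [integral_const_mul]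
    _ = _ := by rw [hshift, gaussian_int_Ici_zero]
  unfold gaussianQ
  have hsq : (0:ℝ) < Real.sqrt (2 * Real.pi) :=
    Real.sqrt_pos.mpr (by positivity)
  rw [inv_mul_le_iff₀ hsq]
  calc (∫ t in Set.Ici x, Real.exp (-t ^ 2 / 2))
      ≤ Real.exp (-x^2/2) * (Real.sqrt (2 * Real.pi) / 2) := this
    _ = Real.sqrt (2 * Real.pi) * (1/2 * Real.exp (-x^2/2)) := by ring

/-- Equation (10): doubly-exponential decay of the SK decoding error.
With `S = P/σ²` and `C = (1/2)·log₂(1 + h²·S)`, for every blocklength `N ≥ 1` and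
every rate `R`,
`2·Q(√(12·h²·S·(1+h²·S)^{N−1}) / 2^{N·R+1}) ≤ exp(−(3/2)·(h²·S/(1+h²·S))·2^{2N(C−R)})`;
in particular, if `R < C` the right-hand side tends to zero as `N → ∞`. -/
theorem sk_decoding_error_doubly_exponential (h P σ : ℝ) (hh : 0 < h) (hP : 0 < P)
    (hσ : 0 < σ) (S C : ℝ) (hS : S = P / σ ^ 2)
    (hC : C = (1 / 2) * Real.logb 2 (1 + h ^ 2 * S)) :
    (∀ N : ℕ, 1 ≤ N → ∀ R : ℝ,
      2 * gaussianQ (Real.sqrt (12 * h ^ 2 * S * (1 + h ^ 2 * S) ^ (N - 1)) /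
          (2 : ℝ) ^ ((N : ℝ) * R + 1)) ≤
        Real.exp (-(3 / 2) * (h ^ 2 * S / (1 + h ^ 2 * S)) *
          (2 : ℝ) ^ (2 * (N : ℝ) * (C - R)))) ∧
    (∀ R : ℝ, R < C →
      Tendsto (fun N : ℕ =>
          Real.exp (-(3 / 2) * (h ^ 2 * S / (1 + h ^ 2 * S)) *
            (2 : ℝ) ^ (2 * (N : ℝ) * (C - R)))) atTop (nhds 0)) := by
  have hSpos : 0 < S := by rw [hS]; positivity
  set a : ℝ := h ^ 2 * S with ha_def
  have ha : 0 < a := by positivity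
  have h1a : (0:ℝ) < 1 + a := by linarith
  constructor
  · intro N hN R
    set x : ℝ := Real.sqrt (12 * h ^ 2 * S * (1 + a) ^ (N - 1)) /
        (2 : ℝ) ^ ((N : ℝ) * R + 1) with hx_def
    have hb : (0:ℝ) < (2 : ℝ) ^ ((N : ℝ) * R + 1) := Real.rpow_pos_of_pos (by norm_num) _
    have hx0 : 0 ≤ x := div_nonneg (Real.sqrt_nonneg _) hb.le
    have key : x ^ 2 / 2 = (3 / 2) * (a / (1 + a)) * (2 : ℝ) ^ (2 * (N : ℝ) * (C - R)) := by
      have hsq : (Real.sqrt (12 * h ^ 2 * S * (1 + a) ^ (N - 1))) ^ 2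
          = 12 * a * (1 + a) ^ (N - 1) := by
        rw [Real.sq_sqrt (by positivity)]; ring
      have hb2 : ((2 : ℝ) ^ ((N : ℝ) * R + 1)) ^ 2
          = 4 * (2 : ℝ) ^ (2 * (N : ℝ) * R) := by
        rw [← Real.rpow_natCast ((2:ℝ) ^ ((N:ℝ)*R+1)) 2, ← Real.rpow_mul (by norm_num)]
        rw [show ((N : ℝ) * R + 1) * (2:ℕ) = 2 * (N:ℝ) * R + 2 by push_cast; ring,
          Real.rpow_add (by norm_num)]
        norm_num [mul_comm]
      have hexp : (2 : ℝ) ^ (2 * (N : ℝ) * (C - R))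
          = (1 + a) ^ N / (2 : ℝ) ^ (2 * (N : ℝ) * R) := by
        rw [show 2 * (N : ℝ) * (C - R) = 2 * (N:ℝ) * C - 2 * (N:ℝ) * R by ring,
          Real.rpow_sub (by norm_num)]
        congr 1
        rw [hC, show 2 * (N:ℝ) * (1 / 2 * Real.logb 2 (1 + a)) = Real.logb 2 (1 + a) * (N:ℝ) by ring,
          Real.rpow_mul (by norm_num), Real.rpow_logb (by norm_num) (by norm_num) h1a,
          Real.rpow_natCast]
      have hpow : (1 + a) ^ N = (1 + a) ^ (N - 1) * (1 + a) := by
        conv_lhs => rw [show N = (N - 1) + 1 from (Nat.succ_pred_eq_of_pos hN).symm]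
        rw [pow_succ]
      rw [hx_def, div_pow, hsq, hb2, hexp, hpow]
      field_simp
      ring
    calc 2 * gaussianQ x ≤ 2 * ((1/2) * Real.exp (-x^2/2)) := by
          linarith [gaussianQ_le x hx0]
      _ = Real.exp (-(x^2/2)) := by rw [neg_div]; ring
      _ = _ := by rw [key]; ring_nf
  · intro R hR
    have hc : -(3 / 2) * (a / (1 + a)) < 0 := by
      have : 0 < a / (1 + a) := div_pos ha h1a
      nlinarith
    have h2 : Tendsto (fun N : ℕ => (2:ℝ) ^ (2 * (N : ℝ) * (C - R))) atTop atTop := by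
      have hlog : (0:ℝ) < Real.log 2 := Real.log_pos (by norm_num)
      have hN : Tendsto (fun N : ℕ => (N : ℝ)) atTop atTop := tendsto_natCast_atTop_atTop
      have hmul : Tendsto (fun N : ℕ => Real.log 2 * (2 * (N:ℝ) * (C - R))) atTop atTop := by
        have := hN.atTop_mul_const (show (0:ℝ) < 2 * (C - R) * Real.log 2 by nlinarith)
        refine this.congr (fun N => by ring)
      refine (Real.tendsto_exp_atTop.comp hmul).congr (fun N => ?_)
      simp only [Function.comp]
      rw [Real.rpow_def_of_pos (by norm_num : (0:ℝ) < 2)]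
    have h3 : Tendsto (fun N : ℕ => -(3 / 2) * (a / (1 + a)) *
        (2:ℝ) ^ (2 * (N : ℝ) * (C - R))) atTop atBot :=
      h2.const_mul_atTop_of_neg hc
    exact Real.tendsto_exp_atBot.comp h3
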